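/- arXiv:math/0506002 — 5 statements merged into one kernel-verified Lean document; each statement's English description precedes it below -/
import Mathlib

section
/- Let N ≥ 1 and let S̃_N be the group of bijections of ℤ^N generated by all coordinate transpositions σ_{i,j} together with γ₁(z₁, z₂, …, z_N) = (−z₁, z₂ − z₁, …, z_N − z₁). Then every orbit of the action of S̃_N on ℤ^N contains at least one point of the cone C_N^+ = {z ∈ ℤ^N : 0 ≤ z₁ ≤ z₂ ≤ … ≤ z_N}. -/
/-- The map `γ₁(z₁, …, z_N) = (−z₁, z₂ − z₁, …, z_N − z₁)` on `ℤ^N`. -/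
def gamma1fun (N : ℕ) (hN : 0 < N) (z : Fin N → ℤ) : Fin N → ℤ :=
  fun i => if i = ⟨0, hN⟩ then -z ⟨0, hN⟩ else z i - z ⟨0, hN⟩

lemma gamma1fun_involutive (N : ℕ) (hN : 0 < N) :
    Function.Involutive (gamma1fun N hN) := by
  intro z
  funext i
  by_cases h : i = ⟨0, hN⟩ <;> simp [gamma1fun, h]

/-- `γ₁` as a permutation of `ℤ^N`. -/
def gamma1Perm (N : ℕ) (hN : 0 < N) : Equiv.Perm (Fin N → ℤ) :=
  (gamma1fun_involutive N hN).toPerm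

/-- The permutation of `ℤ^N` swapping the `i`-th and `j`-th coordinates. -/
def swapPerm (N : ℕ) (i j : Fin N) : Equiv.Perm (Fin N → ℤ) :=
  (Equiv.swap i j).arrowCongr (Equiv.refl ℤ)

/-- The group `S̃_N` generated by the coordinate transpositions and `γ₁`. -/
def Stilde (N : ℕ) (hN : 0 < N) : Subgroup (Equiv.Perm (Fin N → ℤ)) :=
  Subgroup.closure ({gamma1Perm N hN} ∪ {e | ∃ i j : Fin N, e = swapPerm N i j})

/-- The cone `C_N^+` of lattice points with nonnegative, weakly increasing coordinates. -/
def coneC (N : ℕ) (hN : 0 < N) : Set (Fin N → ℤ) :=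
  {z | 0 ≤ z ⟨0, hN⟩ ∧ Monotone z}

/-- The homomorphism sending a permutation of indices to the induced permutation of `ℤ^N`. -/
def permHom (N : ℕ) : Equiv.Perm (Fin N) →* Equiv.Perm (Fin N → ℤ) where
  toFun τ := τ.arrowCongr (Equiv.refl ℤ)
  map_one' := by ext f i; simp; rfl
  map_mul' σ τ := by ext f i; simp [Equiv.arrowCongr, Equiv.Perm.mul_apply, Equiv.Perm.inv_def, mul_inv_rev]; rfl

lemma permHom_mem (N : ℕ) (hN : 0 < N) (τ : Equiv.Perm (Fin N)) :
    permHom N τ ∈ Stilde N hN := by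
  have h1 : τ ∈ Subgroup.closure {σ : Equiv.Perm (Fin N) | σ.IsSwap} := by
    rw [Equiv.Perm.closure_isSwap]; trivial
  have h2 : Subgroup.closure {σ : Equiv.Perm (Fin N) | σ.IsSwap} ≤
      (Stilde N hN).comap (permHom N) := by
    apply Subgroup.closure_le _ |>.2
    rintro s ⟨i, j, _, rfl⟩
    exact Subgroup.subset_closure (Or.inr ⟨i, j, rfl⟩)
  exact h2 h1

lemma permHom_apply (N : ℕ) (τ : Equiv.Perm (Fin N)) (z : Fin N → ℤ) :
    permHom N τ⁻¹ z = z ∘ τ := by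
  ext i; simp [permHom, Equiv.arrowCongr]; rfl

theorem orbit_meets_cone (N : ℕ) (hN : 1 ≤ N) (z : Fin N → ℤ) :
    ∃ f ∈ Stilde N hN, f z ∈ coneC N hN := by
  set σ := Tuple.sort z with hσ
  set w : Fin N → ℤ := z ∘ σ with hw
  have hwmono : Monotone w := Tuple.monotone_sort z
  have happ : (permHom N σ⁻¹) z = w := permHom_apply N σ z
  by_cases h0 : 0 ≤ w ⟨0, hN⟩
  · exact ⟨permHom N σ⁻¹, permHom_mem N hN _, by rw [happ]; exact ⟨h0, hwmono⟩⟩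
  · set v := gamma1fun N hN w with hv
    have hvpos : ∀ i, 0 ≤ v i := by
      intro i
      by_cases hi : i = ⟨0, hN⟩
      · simp [hv, gamma1fun, hi]; omega
      · have : w ⟨0, hN⟩ ≤ w i := hwmono (by exact Fin.mk_le_of_le_val (Nat.zero_le _))
        simp [hv, gamma1fun, hi]; omega
    set τ := Tuple.sort v with hτ
    have humono : Monotone (v ∘ τ) := Tuple.monotone_sort v
    refine ⟨permHom N τ⁻¹ * gamma1Perm N hN * permHom N σ⁻¹, ?_, ?_⟩
    · exact mul_mem (mul_mem (permHom_mem N hN _)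
        (Subgroup.subset_closure (Or.inl rfl))) (permHom_mem N hN _)
    · have : (permHom N τ⁻¹ * gamma1Perm N hN * permHom N σ⁻¹) z = v ∘ τ := by
        simp only [Equiv.Perm.mul_apply, happ]
        have : gamma1Perm N hN w = v := rfl
        rw [this, permHom_apply]
      rw [this]
      exact ⟨hvpos _, humono⟩
end

section
/- Let N ≥ 1 and let S̃_N be the group of bijections of ℤ^N generated by coordinate transpositions and γ₁(z₁, …, z_N) = (−z₁, z₂ − z₁, …, z_N − z₁). Then every orbit of S̃_N on ℤ^N contains exactly one point of the cone C_N^+ = {z ∈ ℤ^N : 0 ≤ z₁ ≤ … ≤ z_N}; consequently the quotient ℤ^N / S̃_N is in bijection with C_N^+. -/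
/-! ### Auxiliary material -/

/-- The augmented multiset `{0, z₁, …, z_N}` of a point `z ∈ ℤ^N`. -/
def Mz {N : ℕ} (z : Fin N → ℤ) : Multiset ℤ :=
  0 ::ₘ Multiset.map z Finset.univ.val

lemma Mz_comp_perm {N : ℕ} (z : Fin N → ℤ) (σ : Equiv.Perm (Fin N)) :
    Mz (z ∘ σ) = Mz z := by
  unfold Mz
  congr 1
  conv_rhs => rw [← Multiset.map_univ_val_equiv σ]
  rw [Multiset.map_map]

lemma Mz_gamma {N : ℕ} (hN : 0 < N) (z : Fin N → ℤ) :
    Mz (gamma1fun N hN z) = Multiset.map (· + (-z ⟨0, hN⟩)) (Mz z) := by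
  classical
  set i0 : Fin N := ⟨0, hN⟩ with hi0
  have h0 : (Finset.univ.val : Multiset (Fin N)) = i0 ::ₘ Finset.univ.val.erase i0 :=
    (Multiset.cons_erase (Finset.mem_univ i0)).symm
  have hrest : Multiset.map (gamma1fun N hN z) (Finset.univ.val.erase i0)
      = Multiset.map (fun i => z i + (-z i0)) (Finset.univ.val.erase i0) := by
    apply Multiset.map_congr rfl
    intro i hi
    have hne : i ≠ i0 := (Finset.univ.nodup.mem_erase_iff.mp hi).1
    simp [gamma1fun, show i ≠ ⟨0, hN⟩ from hne, sub_eq_add_neg, hi0]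
  unfold Mz
  rw [h0]
  simp only [Multiset.map_cons, Multiset.map_map]
  rw [hrest]
  have hg0 : gamma1fun N hN z i0 = -z i0 := by simp [gamma1fun, hi0]
  rw [hg0]
  have : ((· + (-z i0)) ∘ z) = fun i => z i + (-z i0) := rfl
  rw [this, zero_add, add_neg_cancel, Multiset.cons_swap]

lemma Stilde_rel {N : ℕ} (hN : 0 < N) {f : Equiv.Perm (Fin N → ℤ)}
    (hf : f ∈ Stilde N hN) :
    ∀ z : Fin N → ℤ, ∃ c : ℤ, Mz (f z) = Multiset.map (· + c) (Mz z) := by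
  induction hf using Subgroup.closure_induction with
  | mem g hg =>
      intro z
      rcases hg with hg | ⟨i, j, rfl⟩
      · rcases hg with rfl
        refine ⟨-z ⟨0, hN⟩, ?_⟩
        have : gamma1Perm N hN z = gamma1fun N hN z := rfl
        rw [this, Mz_gamma hN z]
      · refine ⟨0, ?_⟩
        have h1 : swapPerm N i j z = z ∘ (Equiv.swap i j) := by
          funext k; simp [swapPerm, Equiv.arrowCongr]
        rw [h1, Mz_comp_perm]
        simp
  | one =>
      intro z
      exact ⟨0, by simp⟩
  | mul x y hx hy ihx ihy =>
      intro z
      obtain ⟨c₂, h₂⟩ := ihy z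
      obtain ⟨c₁, h₁⟩ := ihx (y z)
      refine ⟨c₂ + c₁, ?_⟩
      have : (x * y) z = x (y z) := rfl
      rw [this, h₁, h₂, Multiset.map_map]
      apply Multiset.map_congr rfl
      intro t _
      simp [Function.comp, add_assoc]
  | inv x hx ihx =>
      intro z
      obtain ⟨c, hc⟩ := ihx (x⁻¹ z)
      have hz : x (x⁻¹ z) = z := by simp
      rw [hz] at hc
      refine ⟨-c, ?_⟩
      rw [hc, Multiset.map_map]
      have : ((· + (-c)) ∘ (· + c)) = (id : ℤ → ℤ) := by
        funext t; simp
      rw [this, Multiset.map_id]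

/-- Coordinate permutations lie in `S̃_N`. -/
lemma permPerm_mem {N : ℕ} (hN : 0 < N) (σ : Equiv.Perm (Fin N)) :
    σ.arrowCongr (Equiv.refl ℤ) ∈ Stilde N hN := by
  refine Equiv.Perm.swap_induction_on σ ?_ ?_
  · have : ((1 : Equiv.Perm (Fin N)).arrowCongr (Equiv.refl ℤ)) = 1 := by
      ext z; rfl
    rw [this]; exact Subgroup.one_mem _
  · intro f x y hxy ih
    have hmul : ((Equiv.swap x y * f).arrowCongr (Equiv.refl ℤ))
        = ((Equiv.swap x y).arrowCongr (Equiv.refl ℤ)) * (f.arrowCongr (Equiv.refl ℤ)) := by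
      ext z; rfl
    rw [hmul]
    refine Subgroup.mul_mem _ ?_ ih
    exact Subgroup.subset_closure (Or.inr ⟨x, y, rfl⟩)

lemma arrowCongr_apply' {N : ℕ} (σ : Equiv.Perm (Fin N)) (z : Fin N → ℤ) :
    (σ⁻¹.arrowCongr (Equiv.refl ℤ)) z = z ∘ σ := by
  funext k; simp [Equiv.arrowCongr, Equiv.Perm.inv_def]

/-- Existence: every point can be moved into the cone. -/
lemma exists_cone {N : ℕ} (hN : 0 < N) (z : Fin N → ℤ) :
    ∃ w, w ∈ coneC N hN ∧ ∃ f ∈ Stilde N hN, f z = w := by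
  classical
  have hle : ∀ i : Fin N, (⟨0, hN⟩ : Fin N) ≤ i := fun i => by simp [Fin.le_def]
  set σ := Tuple.sort z with hσ
  set z₁ := z ∘ σ with hz₁
  have hmono₁ : Monotone z₁ := Tuple.monotone_sort z
  have hmem₁ : (σ⁻¹.arrowCongr (Equiv.refl ℤ)) ∈ Stilde N hN := permPerm_mem hN σ⁻¹
  by_cases hpos : 0 ≤ z₁ ⟨0, hN⟩
  · exact ⟨z₁, ⟨hpos, hmono₁⟩, _, hmem₁, arrowCongr_apply' σ z⟩
  · push_neg at hpos
    set z₂ := gamma1fun N hN z₁ with hz₂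
    have hnn : ∀ i, 0 ≤ z₂ i := by
      intro i
      by_cases h : i = ⟨0, hN⟩
      · have : z₂ i = -z₁ ⟨0, hN⟩ := by simp [hz₂, gamma1fun, h]
        rw [this]
        omega
      · have h2 : z₁ ⟨0, hN⟩ ≤ z₁ i := hmono₁ (hle i)
        have : z₂ i = z₁ i - z₁ ⟨0, hN⟩ := by simp [hz₂, gamma1fun, h]
        rw [this]
        omega
    set τ := Tuple.sort z₂ with hτ
    set w := z₂ ∘ τ with hw
    have hmonow : Monotone w := Tuple.monotone_sort z₂
    refine ⟨w, ⟨hnn _, hmonow⟩, ?_⟩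
    refine ⟨(τ⁻¹.arrowCongr (Equiv.refl ℤ)) * gamma1Perm N hN * (σ⁻¹.arrowCongr (Equiv.refl ℤ)),
      ?_, ?_⟩
    · exact Subgroup.mul_mem _
        (Subgroup.mul_mem _ (permPerm_mem hN τ⁻¹)
          (Subgroup.subset_closure (Or.inl rfl))) hmem₁
    · show (τ⁻¹.arrowCongr (Equiv.refl ℤ)) (gamma1Perm N hN ((σ⁻¹.arrowCongr (Equiv.refl ℤ)) z)) = w
      rw [arrowCongr_apply' σ z]
      have : gamma1Perm N hN z₁ = z₂ := rfl
      rw [← hz₁, this, arrowCongr_apply' τ z₂]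

lemma mem_Mz_nonneg {N : ℕ} (hN : 0 < N) {w : Fin N → ℤ} (hw : w ∈ coneC N hN) :
    ∀ x ∈ Mz w, 0 ≤ x := by
  intro x hx
  rcases Multiset.mem_cons.mp hx with rfl | hx
  · exact le_refl 0
  · rcases Multiset.mem_map.mp hx with ⟨i, _, rfl⟩
    have h0 : (⟨0, hN⟩ : Fin N) ≤ i := by simp [Fin.le_def]
    exact le_trans hw.1 (hw.2 h0)

/-- Uniqueness: two cone points with translate-equivalent augmented multisets are equal. -/
lemma cone_unique {N : ℕ} (hN : 0 < N) {w w' : Fin N → ℤ}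
    (hw : w ∈ coneC N hN) (hw' : w' ∈ coneC N hN) {c : ℤ}
    (h : Mz w' = Multiset.map (· + c) (Mz w)) : w' = w := by
  have hc0 : c = 0 := by
    have h1 : (0 : ℤ) ∈ Mz w' := Multiset.mem_cons_self _ _
    rw [h] at h1
    rcases Multiset.mem_map.mp h1 with ⟨x, hx, hxc⟩
    have hx0 : 0 ≤ x := mem_Mz_nonneg hN hw x hx
    have h2 : (0 : ℤ) + c ∈ Mz w' := by
      rw [h]
      exact Multiset.mem_map.mpr ⟨0, Multiset.mem_cons_self _ _, rfl⟩
    have hc : 0 ≤ 0 + c := mem_Mz_nonneg hN hw' _ h2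
    omega
  subst hc0
  simp only [add_zero] at h
  rw [Multiset.map_id'] at h
  unfold Mz at h
  have h3 : Multiset.map w' Finset.univ.val = Multiset.map w Finset.univ.val :=
    (Multiset.cons_inj_right _).mp h
  rw [Fin.univ_val_map, Fin.univ_val_map] at h3
  have hperm : List.Perm (List.ofFn w') (List.ofFn w) := Multiset.coe_eq_coe.mp h3
  have heq : List.ofFn w' = List.ofFn w :=
    hperm.eq_of_sortedLE (List.sortedLE_ofFn_iff.mpr hw'.2) (List.sortedLE_ofFn_iff.mpr hw.2)
  exact List.ofFn_injective heq

theorem orbit_meets_cone_unique (N : ℕ) (hN : 1 ≤ N) :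
    (∀ z : Fin N → ℤ, ∃! w : Fin N → ℤ,
        w ∈ coneC N hN ∧ ∃ f ∈ Stilde N hN, f z = w) ∧
      Nonempty (Quotient (MulAction.orbitRel (Stilde N hN) (Fin N → ℤ)) ≃ coneC N hN) := by
  classical
  have exU : ∀ z : Fin N → ℤ, ∃! w : Fin N → ℤ,
      w ∈ coneC N hN ∧ ∃ f ∈ Stilde N hN, f z = w := by
    intro z
    obtain ⟨w, hwc, f, hf, hfz⟩ := exists_cone hN z
    refine ⟨w, ⟨hwc, f, hf, hfz⟩, ?_⟩
    rintro w' ⟨hw'c, f', hf', hf'z⟩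
    obtain ⟨c₁, h₁⟩ := Stilde_rel hN hf z
    obtain ⟨c₂, h₂⟩ := Stilde_rel hN hf' z
    rw [hfz] at h₁
    rw [hf'z] at h₂
    have h3 : Mz w' = Multiset.map (· + (c₂ - c₁)) (Mz w) := by
      rw [h₂, h₁, Multiset.map_map]
      apply Multiset.map_congr rfl
      intro t _
      simp only [Function.comp_apply]
      ring
    exact cone_unique hN hwc hw'c h3
  refine ⟨exU, ?_⟩
  choose C hC using exU
  -- `hC z : (C z ∈ coneC ∧ ∃ f ∈ Stilde, f z = C z) ∧ ∀ y, … → y = C z`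
  have wd : ∀ z z' : Fin N → ℤ,
      (MulAction.orbitRel (Stilde N hN) (Fin N → ℤ)).r z z' → C z = C z' := by
    intro z z' hr
    obtain ⟨g, hg⟩ := hr
    have hg2 : (g : Equiv.Perm (Fin N → ℤ)) z' = z := hg
    obtain ⟨f', hf', hf'z⟩ := (hC z').1.2
    refine ((hC z).2 (C z') ⟨(hC z').1.1, f' * (↑g)⁻¹, ?_, ?_⟩).symm
    · exact Subgroup.mul_mem _ hf' (Subgroup.inv_mem _ g.2)
    · show f' (((g : Equiv.Perm (Fin N → ℤ)))⁻¹ z) = C z'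
      rw [← hg2]
      simp [hf'z]
  let F : Quotient (MulAction.orbitRel (Stilde N hN) (Fin N → ℤ)) → coneC N hN :=
    Quotient.lift (fun z => (⟨C z, (hC z).1.1⟩ : coneC N hN)) (by
      intro z z' h
      exact Subtype.ext (wd z z' h))
  have hFsurj : Function.Surjective F := by
    rintro ⟨w, hw⟩
    refine ⟨Quotient.mk _ w, ?_⟩
    have : w = C w := (hC w).2 w ⟨hw, 1, Subgroup.one_mem _, rfl⟩
    exact Subtype.ext this.symm
  have hFinj : Function.Injective F := by
    intro q q'
    induction q using Quotient.ind
    induction q' using Quotient.ind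
    rename_i z z'
    intro h
    have hCz : C z = C z' := congrArg Subtype.val h
    obtain ⟨f, hf, hfz⟩ := (hC z).1.2
    obtain ⟨f', hf', hf'z⟩ := (hC z').1.2
    apply Quotient.sound
    refine ⟨⟨f⁻¹ * f', Subgroup.mul_mem _ (Subgroup.inv_mem _ hf) hf'⟩, ?_⟩
    show (f⁻¹ * f') z' = z
    have : (f⁻¹ * f') z' = f⁻¹ (f' z') := rfl
    rw [this, hf'z, ← hCz, ← hfz]
    simp
  exact ⟨Equiv.ofBijective F ⟨hFinj, hFsurj⟩⟩
end

section
/- Let N ≥ 2. The group S̃_N generated by the coordinate transpositions σ_{i,j} of ℤ^N and the map γ₁(z₁, …, z_N) = (−z₁, z₂ − z₁, …, z_N − z₁) is isomorphic to the symmetric group S_{N+1} on N+1 letters. -/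
open Equiv

/-- The underlying function of the action of `Perm (Fin (n+1))` on `ℤ^n`. -/
def Afun (n : ℕ) (σ : Equiv.Perm (Fin (n + 1))) (z : Fin n → ℤ) : Fin n → ℤ :=
  fun i => (Fin.cons 0 z : Fin (n+1) → ℤ) (σ⁻¹ i.succ) - (Fin.cons 0 z : Fin (n+1) → ℤ) (σ⁻¹ 0)

lemma cons_Afun (n : ℕ) (σ : Equiv.Perm (Fin (n + 1))) (z : Fin n → ℤ) :
    (Fin.cons 0 (Afun n σ z) : Fin (n+1) → ℤ) =
      fun j => (Fin.cons 0 z : Fin (n+1) → ℤ) (σ⁻¹ j) - (Fin.cons 0 z : Fin (n+1) → ℤ) (σ⁻¹ 0) := by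
  funext j
  refine Fin.cases ?_ (fun i => ?_) j <;> simp [Afun]

lemma Afun_one (n : ℕ) (z : Fin n → ℤ) : Afun n 1 z = z := by
  funext i; simp [Afun]

lemma Afun_mul (n : ℕ) (σ τ : Equiv.Perm (Fin (n + 1))) (z : Fin n → ℤ) :
    Afun n σ (Afun n τ z) = Afun n (σ * τ) z := by
  funext i
  simp only [Afun, cons_Afun, mul_inv_rev, Equiv.Perm.mul_apply]
  ring

/-- The action as a permutation of `ℤ^n`. -/
def Aperm (n : ℕ) (σ : Equiv.Perm (Fin (n + 1))) : Equiv.Perm (Fin n → ℤ) where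
  toFun := Afun n σ
  invFun := Afun n σ⁻¹
  left_inv z := by rw [Afun_mul, inv_mul_cancel, Afun_one]
  right_inv z := by rw [Afun_mul, mul_inv_cancel, Afun_one]

/-- The action as a group homomorphism. -/
def phiHom (n : ℕ) : Equiv.Perm (Fin (n + 1)) →* Equiv.Perm (Fin n → ℤ) where
  toFun := Aperm n
  map_one' := by ext z; simp [Aperm, Afun_one]
  map_mul' σ τ := by ext z i; exact (congrFun (Afun_mul n σ τ z) i).symm

lemma phiHom_injective (n : ℕ) : Function.Injective (phiHom n) := by
  rw [injective_iff_map_eq_one]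
  intro σ h
  set z : Fin n → ℤ := fun i => (i : ℤ) + 1 with hz
  have hcons : ∀ j : Fin (n+1), (Fin.cons 0 z : Fin (n+1) → ℤ) j = (j : ℤ) := by
    intro j
    refine Fin.cases ?_ (fun i => ?_) j <;> simp [hz]
  have hzfix : Afun n σ z = z := by
    have := congrArg (fun (e : Equiv.Perm (Fin n → ℤ)) => e z) h
    simpa [phiHom, Aperm] using this
  have key : ∀ j : Fin (n+1), ((σ⁻¹ j : Fin (n+1)) : ℤ) = (j : ℤ) + ((σ⁻¹ 0 : Fin (n+1)) : ℤ) := by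
    intro j
    refine Fin.cases ?_ (fun i => ?_) j
    · simp
    · have := congrFun hzfix i
      simp only [Afun, hcons] at this
      simp only [hz] at this
      push_cast [Fin.val_succ]
      omega
  have hc0 : ((σ⁻¹ 0 : Fin (n+1)) : ℤ) = 0 := by
    have h1 := key (Fin.last n)
    have h2 : ((σ⁻¹ (Fin.last n) : Fin (n+1)) : ℤ) ≤ n := by
      exact_mod_cast Nat.lt_succ_iff.mp (σ⁻¹ (Fin.last n)).isLt
    have h3 : (0:ℤ) ≤ ((σ⁻¹ 0 : Fin (n+1)) : ℤ) := Int.natCast_nonneg _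
    simp only [Fin.val_last] at h1
    omega
  have hinv : σ⁻¹ = 1 := by
    ext j
    have := key j
    rw [hc0, add_zero] at this
    exact_mod_cast this
  simpa using congrArg Inv.inv hinv

lemma one_eq_succ_zero (N : ℕ) (hN : 0 < N) : (1 : Fin (N+1)) = Fin.succ ⟨0, hN⟩ := by
  ext
  simp [Fin.val_one']
  omega

lemma phi_swap01 (N : ℕ) (hN : 0 < N) :
    phiHom N (Equiv.swap 0 1) = gamma1Perm N hN := by
  ext z i
  have h1 : (1 : Fin (N+1)) = Fin.succ ⟨0, hN⟩ := one_eq_succ_zero N hN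
  show Afun N (Equiv.swap 0 1) z i = gamma1fun N hN z i
  simp only [Afun, Equiv.swap_inv, Equiv.swap_apply_left, gamma1fun]
  by_cases h : i = ⟨0, hN⟩
  · subst h
    rw [if_pos rfl, ← h1, Equiv.swap_apply_right, h1, Fin.cons_succ, Fin.cons_zero, zero_sub]
  · have hne0 : i.succ ≠ 0 := Fin.succ_ne_zero i
    have hne1 : i.succ ≠ 1 := by
      rw [h1]
      exact fun hh => h (Fin.succ_injective _ hh)
    rw [if_neg h, Equiv.swap_apply_of_ne_of_ne hne0 hne1, Fin.cons_succ, h1, Fin.cons_succ]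

lemma phi_swap_succ (N : ℕ) (i j : Fin N) :
    phiHom N (Equiv.swap i.succ j.succ) = swapPerm N i j := by
  ext z k
  show Afun N (Equiv.swap i.succ j.succ) z k = _
  have h0 : Equiv.swap i.succ j.succ (0 : Fin (N+1)) = 0 :=
    Equiv.swap_apply_of_ne_of_ne (Fin.succ_ne_zero i).symm (Fin.succ_ne_zero j).symm
  have hs : Equiv.swap i.succ j.succ k.succ = (Equiv.swap i j k).succ :=
    (Fin.succ_injective N).swap_apply i j k
  simp [Afun, Equiv.swap_inv, h0, hs, swapPerm, Equiv.arrowCongr, Equiv.swap_inv]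

lemma range_eq_Stilde (N : ℕ) (hN : 0 < N) : (phiHom N).range = Stilde N hN := by
  apply le_antisymm
  · -- range ≤ Stilde
    rw [MonoidHom.range_eq_map, ← Equiv.Perm.closure_isSwap (α := Fin (N+1)),
      MonoidHom.map_closure]
    rw [Subgroup.closure_le]
    rintro e ⟨σ, ⟨a, b, hab, rfl⟩, rfl⟩
    have hswap : ∀ c d : Fin N, phiHom N (Equiv.swap c.succ d.succ) ∈ Stilde N hN := by
      intro c d
      exact Subgroup.subset_closure (Or.inr ⟨c, d, phi_swap_succ N c d⟩)
    have hgam : phiHom N (Equiv.swap 0 1) ∈ Stilde N hN := by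
      rw [phi_swap01 N hN]
      exact Subgroup.subset_closure (Or.inl rfl)
    have h0s : ∀ d : Fin N, phiHom N (Equiv.swap 0 d.succ) ∈ Stilde N hN := by
      intro d
      by_cases hd : d = ⟨0, hN⟩
      · subst hd
        rw [← one_eq_succ_zero N hN]
        exact hgam
      · have h1 : (1 : Fin (N+1)) = Fin.succ ⟨0, hN⟩ := one_eq_succ_zero N hN
        set τ : Equiv.Perm (Fin (N+1)) := Equiv.swap 1 d.succ with hτ
        have h01 : (0 : Fin (N+1)) ≠ 1 := by
          rw [h1]; exact (Fin.succ_ne_zero _).symm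
        have hτ0 : τ 0 = 0 := Equiv.swap_apply_of_ne_of_ne h01 (Fin.succ_ne_zero d).symm
        have hτ1 : τ 1 = d.succ := Equiv.swap_apply_left _ _
        have hconj : Equiv.swap (0 : Fin (N+1)) d.succ = τ * Equiv.swap 0 1 * τ⁻¹ := by
          have := Equiv.swap_apply_apply τ 0 1
          rwa [hτ0, hτ1] at this
        rw [hconj, map_mul, map_mul, map_inv]
        have hτmem : phiHom N τ ∈ Stilde N hN := by
          rw [hτ, h1]
          exact hswap ⟨0, hN⟩ d
        exact mul_mem (mul_mem hτmem hgam) (inv_mem hτmem)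
    rcases Fin.eq_zero_or_eq_succ a with rfl | ⟨c, rfl⟩ <;>
      rcases Fin.eq_zero_or_eq_succ b with rfl | ⟨d, rfl⟩
    · exact absurd rfl hab
    · exact h0s d
    · rw [Equiv.swap_comm]
      exact h0s c
    · exact hswap c d
  · rw [Stilde]
    rw [Subgroup.closure_le]
    rintro e (rfl | ⟨i, j, rfl⟩)
    · exact ⟨Equiv.swap 0 1, phi_swap01 N hN⟩
    · exact ⟨Equiv.swap i.succ j.succ, phi_swap_succ N i j⟩

theorem Stilde_iso_symmGroup (N : ℕ) (hN : 2 ≤ N) :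
    Nonempty ((Stilde N (by omega)) ≃* Equiv.Perm (Fin (N + 1))) := by
  have hN' : 0 < N := by omega
  have h := range_eq_Stilde N hN'
  exact ⟨(MulEquiv.subgroupCongr h.symm).trans (MonoidHom.ofInjective (phiHom_injective N)).symm⟩
end

section
/- The action of ℤ on finitely supported I : ℤ → ℤ given by n · I = τⁿ(I − δ_n + δ₀) is free on the set of I of strictly positive total degree: if Σ_k I(k) ≥ 1 and n · I = I then n = 0. -/
/-- The `n`-th power of the shift `τ` on finitely supported functions `ℤ → ℤ`:
`(τ^n I) k = I (k + n)`, with `τ` the shift `(τ I) k = I (k + 1)`. -/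
def tauPow (n : ℤ) (I : ℤ →₀ ℤ) : ℤ →₀ ℤ :=
  Finsupp.equivMapDomain ((Equiv.subRight (1 : ℤ)) ^ n) I

/-- The action map `(n, I) ↦ n · I := τⁿ(I − δ_n + δ₀)`. -/
noncomputable def dotAct (n : ℤ) (I : ℤ →₀ ℤ) : ℤ →₀ ℤ :=
  tauPow n (I - Finsupp.single n 1 + Finsupp.single 0 1)

lemma subRight_one_zpow (n : ℤ) : ∀ k : ℤ, ((Equiv.subRight (1 : ℤ)) ^ n) k = k - n := by
  induction n using Int.induction_on with
  | zero => intro k; simp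
  | succ m ih =>
      intro k
      rw [zpow_add_one, Equiv.Perm.mul_apply, Equiv.subRight_apply, ih]
      ring
  | pred m ih =>
      intro k
      rw [zpow_sub_one, Equiv.Perm.mul_apply, ih ((Equiv.subRight (1:ℤ))⁻¹ k)]
      have : ((Equiv.subRight (1:ℤ))⁻¹) k = k + 1 := by
        simp [Equiv.Perm.inv_def]
      rw [this]; ring

lemma tauPow_apply (n : ℤ) (J : ℤ →₀ ℤ) (k : ℤ) : tauPow n J k = J (k + n) := by
  have hk : ((Equiv.subRight (1 : ℤ)) ^ n) (k + n) = k := by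
    rw [subRight_one_zpow]; ring
  conv_lhs => rw [tauPow, ← hk, Finsupp.equivMapDomain_apply]
  rw [Equiv.symm_apply_apply]

theorem dotAct_free (I : ℤ →₀ ℤ) (hdeg : 1 ≤ I.sum fun _ v => v) (n : ℤ)
    (h : dotAct n I = I) : n = 0 := by
  by_contra hn
  -- the pointwise relation
  have R : ∀ k : ℤ, I (k + n) - (if n = k + n then (1:ℤ) else 0)
      + (if (0:ℤ) = k + n then 1 else 0) = I k := by
    intro k
    have hk := DFunLike.congr_fun h k
    rw [dotAct, tauPow_apply, Finsupp.add_apply, Finsupp.sub_apply,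
      Finsupp.single_apply, Finsupp.single_apply] at hk
    exact hk
  have Rstep : ∀ k : ℤ, k ≠ 0 → k ≠ -n → I (k + n) = I k := by
    intro k h0 h1
    have hk := R k
    rw [if_neg (by omega), if_neg (by omega)] at hk
    linarith
  -- key vanishing lemma
  have key : ∀ (x d : ℤ), d ≠ 0 →
      (∀ m : ℕ, I (x + ((m : ℤ) + 1) * d) = I (x + (m : ℤ) * d)) → I x = 0 := by
    intro x d hd hstep
    have hchain : ∀ m : ℕ, I (x + (m : ℤ) * d) = I x := by
      intro m
      induction m with
      | zero => simp
      | succ m ih =>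
          have h1 := hstep m
          have e : ((m : ℤ) + 1) = ((m + 1 : ℕ) : ℤ) := by push_cast; ring
          rw [e] at h1
          exact h1.trans ih
    obtain ⟨m, hm⟩ : ∃ m : ℕ, x + (m : ℤ) * d ∉ I.support := by
      by_contra hc
      push_neg at hc
      have hinj : Function.Injective (fun m : ℕ => x + (m : ℤ) * d) := by
        intro a b hab
        have hab' : x + (a : ℤ) * d = x + (b : ℤ) * d := hab
        have h2 : (a : ℤ) * d = (b : ℤ) * d := by linarith
        exact_mod_cast mul_right_cancel₀ hd h2
      exact Set.infinite_range_of_injective hinj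
        (Set.Finite.subset I.support.finite_toSet
          (by rintro _ ⟨m, rfl⟩; exact hc m))
    rw [Finsupp.notMem_support_iff] at hm
    rw [← hchain m]
    exact hm
  -- all values off 0 vanish
  have hzero : ∀ k : ℤ, k ≠ 0 → I k = 0 := by
    intro k hk
    by_cases hdvd : n ∣ k
    · obtain ⟨c, rfl⟩ := hdvd
      rcases lt_trichotomy c 0 with hc | hc | hc
      · apply key (n * c) (-n) (by omega)
        intro m
        have hne0 : n * (c - ((m : ℤ) + 1)) ≠ 0 := mul_ne_zero hn (by omega)
        have hnen : n * (c - ((m : ℤ) + 1)) ≠ -n := by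
          intro hEq
          have : c - ((m : ℤ) + 1) = -1 :=
            mul_left_cancel₀ hn (hEq.trans (by ring : (-n) = n * (-1)))
          omega
        have hR := Rstep (n * (c - ((m : ℤ) + 1))) hne0 hnen
        rw [show n * c + ((m : ℤ) + 1) * (-n) = n * (c - ((m : ℤ) + 1)) from by ring,
          show n * c + (m : ℤ) * (-n) = n * (c - ((m : ℤ) + 1)) + n from by ring]
        exact hR.symm
      · exfalso; apply hk; rw [hc, mul_zero]
      · apply key (n * c) n hn
        intro m
        have hne0 : n * (c + (m : ℤ)) ≠ 0 := mul_ne_zero hn (by omega)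
        have hnen : n * (c + (m : ℤ)) ≠ -n := by
          intro hEq
          have : c + (m : ℤ) = -1 :=
            mul_left_cancel₀ hn (hEq.trans (by ring : (-n) = n * (-1)))
          omega
        have hR := Rstep (n * (c + (m : ℤ))) hne0 hnen
        rw [show n * c + ((m : ℤ) + 1) * n = n * (c + (m : ℤ)) + n from by ring,
          show n * c + (m : ℤ) * n = n * (c + (m : ℤ)) from by ring]
        exact hR
    · apply key k n hn
      intro m
      have h0 : k + (m : ℤ) * n ≠ 0 := by
        intro h0
        exact hdvd ⟨-(m : ℤ), by linear_combination h0⟩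
      have h1 : k + (m : ℤ) * n ≠ -n := by
        intro h1
        exact hdvd ⟨-((m : ℤ) + 1), by linear_combination h1⟩
      have hR := Rstep (k + (m : ℤ) * n) h0 h1
      rw [show k + ((m : ℤ) + 1) * n = k + (m : ℤ) * n + n from by ring]
      exact hR
  -- I 0 = -1
  have hIn : I n = 0 := hzero n hn
  have h0 := R 0
  rw [zero_add, if_pos rfl, if_neg (by omega)] at h0
  -- h0 : I n - 1 + 0 = I 0
  have hI0 : I 0 = -1 := by rw [← h0, hIn]; ring
  -- the sum is I 0
  have hsum : (I.sum fun _ v => v) = I 0 := by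
    rw [Finsupp.sum]
    apply Finset.sum_eq_single
    · intro b _ hb0; exact hzero b hb0
    · intro h0'; exact Finsupp.notMem_support_iff.mp h0'
  rw [hsum, hI0] at hdeg
  omega
end

section
/- Let (a_k) be a finitely supported real sequence, not identically zero, and p(x) = Σ_k a_k x^k the associated Laurent polynomial. If p(e^{iθ}) ≠ 0 for all θ ∈ ℝ, then for every ξ ∈ ℓ²(ℤ^N) there exists a unique c ∈ ℓ²(ℤ^N) with (Tc)(z) = Σ_k a_k c(z − ke) = ξ(z) for all z ∈ ℤ^N, where e = (1, …, 1). -/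
open Complex


noncomputable section ConvAux

variable {N : ℕ}

private lemma memℓp_comp_equiv {α β : Type*} {E : Type*} [NormedAddCommGroup E]
    (e : α ≃ β) (f : β → E) (hf : Memℓp f 2) : Memℓp (fun x => f (e x)) 2 := by
  have h2 : (0:ℝ) < (2 : ENNReal).toReal := by norm_num
  rw [memℓp_gen_iff h2] at hf ⊢
  exact (Equiv.summable_iff e).2 hf

/-- translation equiv on the index set -/
private def trE (N : ℕ) (k : ℤ) : (Fin N → ℤ) ≃ (Fin N → ℤ) where
  toFun z := fun i => z i - k
  invFun z := fun i => z i + k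
  left_inv z := by funext i; ring
  right_inv z := by funext i; ring

/-- shift isometry on lp -/
private def shiftE (N : ℕ) (k : ℤ) :
    lp (fun _ : Fin N → ℤ => ℂ) 2 ≃ₗᵢ[ℂ] lp (fun _ : Fin N → ℤ => ℂ) 2 where
  toFun f := ⟨fun z => f (trE N k z), memℓp_comp_equiv (trE N k) f (lp.memℓp f)⟩
  invFun f := ⟨fun z => f ((trE N k).symm z),
    memℓp_comp_equiv (trE N k).symm f (lp.memℓp f)⟩
  left_inv f := by ext z; simp
  right_inv f := by ext z; simp
  map_add' f g := by ext z; simp [lp.coeFn_add]; rfl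
  map_smul' c f := by ext z; simp [lp.coeFn_smul]
  norm_map' f := by
    have h2 : (0:ℝ) < (2 : ENNReal).toReal := by norm_num
    rw [lp.norm_eq_tsum_rpow h2, lp.norm_eq_tsum_rpow h2]
    congr 1
    exact Equiv.tsum_eq (trE N k) (fun z => ‖f z‖ ^ (2 : ENNReal).toReal)


@[simp] private lemma shiftE_apply (k : ℤ) (f : lp (fun _ : Fin N → ℤ => ℂ) 2)
    (z : Fin N → ℤ) : (shiftE N k f) z = f (fun i => z i - k) := rfl

/-- shift as continuous linear map -/
private def Sop (N : ℕ) (k : ℤ) :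
    lp (fun _ : Fin N → ℤ => ℂ) 2 →L[ℂ] lp (fun _ : Fin N → ℤ => ℂ) 2 :=
  (shiftE N k).toLinearIsometry.toContinuousLinearMap

@[simp] private lemma Sop_apply (k : ℤ) (f : lp (fun _ : Fin N → ℤ => ℂ) 2)
    (z : Fin N → ℤ) : (Sop N k f) z = f (fun i => z i - k) := rfl

private lemma Sop_norm_le (k : ℤ) : ‖Sop N k‖ ≤ 1 :=
  LinearIsometry.norm_toContinuousLinearMap_le _

private lemma Sop_mul (j k : ℤ) : Sop N j * Sop N k = Sop N (j + k) := by
  ext f z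
  simp [ContinuousLinearMap.mul_apply, sub_sub]

private lemma Sop_zero : Sop N 0 = 1 := by
  ext f z
  simp

/-- the shift as a unit of the operator ring -/
private def Uu (N : ℕ) :
    (lp (fun _ : Fin N → ℤ => ℂ) 2 →L[ℂ] lp (fun _ : Fin N → ℤ => ℂ) 2)ˣ where
  val := Sop N 1
  inv := Sop N (-1)
  val_inv := by rw [Sop_mul]; norm_num [Sop_zero]
  inv_val := by rw [Sop_mul]; norm_num [Sop_zero]

private lemma Uu_zpow (k : ℤ) : ((Uu N ^ k : _ˣ) : _) = Sop N k := by
  induction k using Int.induction_on with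
  | zero => simp [Sop_zero]
  | succ n ih =>
      rw [zpow_add_one (Uu N) n, Units.val_mul, ih]
      show _ = Sop N ((n+1 : ℤ))
      rw [← Sop_mul]; rfl
  | pred n ih =>
      rw [zpow_sub_one (Uu N) (-n), Units.val_mul, ih]
      show Sop N (-n) * Sop N (-1) = Sop N (-n - 1)
      rw [Sop_mul]; ring_nf

end ConvAux
noncomputable section ConvAux2
variable {N : ℕ}

private abbrev Asp (N : ℕ) :=
  lp (fun _ : Fin N → ℤ => ℂ) 2 →L[ℂ] lp (fun _ : Fin N → ℤ => ℂ) 2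

private lemma norm_algebraMap_le' (r : ℂ) : ‖algebraMap ℂ (Asp N) r‖ ≤ ‖r‖ := by
  rw [Algebra.algebraMap_eq_smul_one, norm_smul]
  calc ‖r‖ * ‖(1 : Asp N)‖ ≤ ‖r‖ * 1 :=
        mul_le_mul_of_nonneg_left (by rw [ContinuousLinearMap.one_def]; exact ContinuousLinearMap.norm_id_le) (norm_nonneg r)
    _ = ‖r‖ := mul_one _

private lemma isUnit_shift_sub (r : ℂ) (hr : ‖r‖ ≠ 1) :
    IsUnit ((Uu N : Asp N) - algebraMap ℂ (Asp N) r) := by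
  rcases lt_or_gt_of_ne hr with h | h
  · -- |r| < 1 :  u - c = u * (1 - u⁻¹ * c)
    have hn : ‖((Uu N)⁻¹ : _ˣ).val * algebraMap ℂ (Asp N) r‖ < 1 := by
      calc ‖((Uu N)⁻¹ : _ˣ).val * algebraMap ℂ (Asp N) r‖
          ≤ ‖((Uu N)⁻¹ : _ˣ).val‖ * ‖algebraMap ℂ (Asp N) r‖ := norm_mul_le _ _
        _ ≤ 1 * ‖r‖ := by
            refine mul_le_mul ?_ (norm_algebraMap_le' r) (norm_nonneg _) zero_le_one
            show ‖Sop N (-1)‖ ≤ 1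
            exact Sop_norm_le _
        _ < 1 := by rwa [one_mul]
    have key : (Uu N : Asp N) - algebraMap ℂ (Asp N) r
        = (Uu N : Asp N) * (1 - ((Uu N)⁻¹ : _ˣ).val * algebraMap ℂ (Asp N) r) := by
      rw [mul_sub, mul_one, Units.mul_inv_cancel_left]
    rw [key]
    exact (Uu N).isUnit.mul (Units.oneSub _ hn).isUnit
  · -- |r| > 1 :  u - c = (-c) * (1 - c⁻¹ * u)
    have hr0 : r ≠ 0 := by
      intro h0; rw [h0] at h; simp at h; exact absurd h (by norm_num)
    have hn : ‖algebraMap ℂ (Asp N) r⁻¹ * (Uu N : Asp N)‖ < 1 := by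
      calc ‖algebraMap ℂ (Asp N) r⁻¹ * (Uu N : Asp N)‖
          ≤ ‖algebraMap ℂ (Asp N) r⁻¹‖ * ‖(Uu N : Asp N)‖ := norm_mul_le _ _
        _ ≤ ‖r⁻¹‖ * 1 := by
            refine mul_le_mul (norm_algebraMap_le' _) ?_ (norm_nonneg _) (norm_nonneg _)
            show ‖Sop N 1‖ ≤ 1
            exact Sop_norm_le _
        _ < 1 := by
            rw [mul_one, norm_inv, inv_lt_one_iff₀]
            right; exact h
    have key : (Uu N : Asp N) - algebraMap ℂ (Asp N) r
        = algebraMap ℂ (Asp N) (-r) * (1 - algebraMap ℂ (Asp N) r⁻¹ * (Uu N : Asp N)) := by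
      rw [mul_sub, mul_one, ← mul_assoc, ← map_mul]
      rw [neg_mul, mul_inv_cancel₀ hr0]
      simp [sub_eq_add_neg, add_comm]
    rw [key]
    exact ((isUnit_iff_ne_zero.2 (neg_ne_zero.2 hr0)).map (algebraMap ℂ (Asp N))).mul
      (Units.oneSub _ hn).isUnit

private lemma multiset_prod_isUnit {M : Type*} [CommMonoid M] : True := trivial

end ConvAux2
noncomputable section ConvAux3
open Polynomial
variable {N : ℕ} {a : ℤ →₀ ℝ}

private lemma support_ne (ha : a ≠ 0) : a.support.Nonempty :=
  Finsupp.support_nonempty_iff.2 ha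

/-- lowest exponent -/
private def mdeg (a : ℤ →₀ ℝ) (ha : a ≠ 0) : ℤ := a.support.min' (support_ne ha)

/-- the polynomial q with p(x) = x^m q(x) -/
private def qpoly (a : ℤ →₀ ℝ) (ha : a ≠ 0) : Polynomial ℂ :=
  ∑ k ∈ a.support, Polynomial.C ((a k : ℂ)) * Polynomial.X ^ (k - mdeg a ha).toNat

private lemma qpoly_eval (ha : a ≠ 0) (r : ℂ) (hr : r ≠ 0) :
    (a.sum fun k ak => (ak : ℂ) * r ^ k) = r ^ (mdeg a ha) * (qpoly a ha).eval r := by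
  rw [qpoly, Polynomial.eval_finset_sum, Finset.mul_sum, Finsupp.sum]
  refine Finset.sum_congr rfl fun k hk => ?_
  have hmk : mdeg a ha ≤ k := Finset.min'_le _ _ hk
  rw [Polynomial.eval_mul, Polynomial.eval_C, Polynomial.eval_pow, Polynomial.eval_X]
  rw [← zpow_natCast r, Int.toNat_of_nonneg (sub_nonneg.2 hmk)]
  rw [← mul_assoc, mul_comm (r ^ (mdeg a ha)) ((a k : ℂ)), mul_assoc,
    ← zpow_add₀ hr]
  congr 2
  ring

private lemma qpoly_eval_one_ne (ha : a ≠ 0)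
    (hp : ∀ θ : ℝ, (a.sum fun k ak => (ak : ℂ) * Complex.exp (Complex.I * k * θ)) ≠ 0) :
    (qpoly a ha).eval 1 ≠ 0 := by
  have h0 := hp 0
  rw [Complex.ofReal_zero] at h0
  have : (a.sum fun k ak => (ak : ℂ) * Complex.exp (Complex.I * k * 0))
      = (a.sum fun k ak => (ak : ℂ) * (1:ℂ) ^ k) := by
    refine Finsupp.sum_congr fun k _ => ?_
    rw [mul_zero, Complex.exp_zero, one_zpow]
  rw [this, qpoly_eval ha 1 one_ne_zero, one_zpow, one_mul] at h0
  exact h0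

private lemma qpoly_ne_zero (ha : a ≠ 0)
    (hp : ∀ θ : ℝ, (a.sum fun k ak => (ak : ℂ) * Complex.exp (Complex.I * k * θ)) ≠ 0) :
    qpoly a ha ≠ 0 := fun h => qpoly_eval_one_ne ha hp (by rw [h]; simp)

private lemma qpoly_roots_off (ha : a ≠ 0)
    (hp : ∀ θ : ℝ, (a.sum fun k ak => (ak : ℂ) * Complex.exp (Complex.I * k * θ)) ≠ 0)
    (r : ℂ) (hroot : (qpoly a ha).eval r = 0) : ‖r‖ ≠ 1 := by
  intro habs
  have hr0 : r ≠ 0 := by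
    intro h; rw [h] at habs; simp at habs
  have hre : Complex.exp (Complex.arg r * Complex.I) = r := by
    have := Complex.norm_mul_exp_arg_mul_I r
    rwa [habs, Complex.ofReal_one, one_mul] at this
  have key : (a.sum fun k ak => (ak : ℂ) * Complex.exp (Complex.I * k * Complex.arg r))
      = (a.sum fun k ak => (ak : ℂ) * r ^ k) := by
    refine Finsupp.sum_congr fun k _ => ?_
    congr 1
    rw [show Complex.I * k * (Complex.arg r : ℂ) = k * ((Complex.arg r : ℂ) * Complex.I) by ring,
      Complex.exp_int_mul, hre]
  have := hp (Complex.arg r)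
  rw [key, qpoly_eval ha r hr0, hroot, mul_zero] at this
  exact this rfl

private lemma isUnit_aeval_prod {N : ℕ} (s : Multiset ℂ) (h : ∀ r ∈ s, ‖r‖ ≠ 1) :
    IsUnit (Polynomial.aeval (Uu N : Asp N)
      ((s.map (fun r => Polynomial.X - Polynomial.C r)).prod)) := by
  induction s using Multiset.induction_on with
  | empty => simp
  | cons r s ih =>
      rw [Multiset.map_cons, Multiset.prod_cons, map_mul]
      refine IsUnit.mul ?_ (ih fun y hy => h y (Multiset.mem_cons_of_mem hy))
      have heq : (Polynomial.aeval (Uu N : Asp N)) (Polynomial.X - Polynomial.C r)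
          = (Uu N : Asp N) - algebraMap ℂ (Asp N) r := by
        rw [map_sub, Polynomial.aeval_X, Polynomial.aeval_C]
      rw [heq]
      exact isUnit_shift_sub r (h r (Multiset.mem_cons_self r s))

end ConvAux3
noncomputable section ConvAux4
open Polynomial
variable {N : ℕ} {a : ℤ →₀ ℝ}

/-- the convolution operator -/
private def Tconv (N : ℕ) (a : ℤ →₀ ℝ) : Asp N :=
  ∑ k ∈ a.support, ((a k : ℂ)) • Sop N k

private lemma Tconv_apply (c : lp (fun _ : Fin N → ℤ => ℂ) 2) (z : Fin N → ℤ) :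
    (Tconv N a c) z = a.sum fun k ak => (ak : ℂ) * c (fun i => z i - k) := by
  rw [Tconv, ContinuousLinearMap.sum_apply, lp.coeFn_sum, Finset.sum_apply, Finsupp.sum]
  refine Finset.sum_congr rfl fun k _ => ?_
  rw [ContinuousLinearMap.smul_apply, lp.coeFn_smul, Pi.smul_apply, smul_eq_mul, Sop_apply]

private lemma Tconv_eq (ha : a ≠ 0) :
    Tconv N a = ((Uu N ^ (mdeg a ha) : _ˣ) : Asp N) * (Polynomial.aeval (Uu N : Asp N))
      (qpoly a ha) := by
  rw [qpoly, map_sum, Finset.mul_sum, Tconv]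
  refine Finset.sum_congr rfl fun k hk => ?_
  have hmk : mdeg a ha ≤ k := Finset.min'_le _ _ hk
  rw [map_mul, Polynomial.aeval_C, map_pow, Polynomial.aeval_X]
  have hupow : (Uu N : Asp N) ^ (k - mdeg a ha).toNat
      = ((Uu N ^ ((k - mdeg a ha : ℤ)) : _ˣ) : Asp N) := by
    rw [← Units.val_pow_eq_pow_val]
    congr 1
    rw [← zpow_natCast (Uu N), Int.toNat_of_nonneg (sub_nonneg.2 hmk)]
  have hadd : mdeg a ha + (k - mdeg a ha) = k := by ring
  rw [hupow, ← mul_assoc, ← Algebra.commutes ((a k : ℂ)), mul_assoc, ← Units.val_mul,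
    ← zpow_add (Uu N), hadd, Algebra.smul_def, Uu_zpow]

private lemma Tconv_isUnit (ha : a ≠ 0)
    (hp : ∀ θ : ℝ, (a.sum fun k ak => (ak : ℂ) * Complex.exp (Complex.I * k * θ)) ≠ 0) :
    IsUnit (Tconv N a) := by
  rw [Tconv_eq ha]
  refine (Units.isUnit _).mul ?_
  have hq0 : qpoly a ha ≠ 0 := qpoly_ne_zero ha hp
  have hsplit : qpoly a ha
      = Polynomial.C (qpoly a ha).leadingCoeff
        * (Multiset.map (fun r => Polynomial.X - Polynomial.C r) (qpoly a ha).roots).prod :=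
    (IsAlgClosed.splits _).eq_prod_roots
  rw [hsplit, map_mul, Polynomial.aeval_C]
  refine IsUnit.mul ?_ ?_
  · exact (isUnit_iff_ne_zero.2 (Polynomial.leadingCoeff_ne_zero.2 hq0)).map
      (algebraMap ℂ (Asp N))
  · refine isUnit_aeval_prod _ fun r hr => ?_
    exact qpoly_roots_off ha hp r ((Polynomial.mem_roots hq0).1 hr)

end ConvAux4
noncomputable section ConvAux5
variable {N : ℕ}

private lemma two_toReal_pos : (0:ℝ) < (2 : ENNReal).toReal := by norm_num

/-- inclusion of real lp into complex lp -/
private def ofRealLp (f : lp (fun _ : Fin N → ℤ => ℝ) 2) : lp (fun _ : Fin N → ℤ => ℂ) 2 :=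
  ⟨fun z => ((f z : ℝ) : ℂ), (memℓp_gen_iff two_toReal_pos).2
    (Summable.congr ((memℓp_gen_iff two_toReal_pos).1 (lp.memℓp f)) fun z => by
      rw [Complex.norm_real])⟩

@[simp] private lemma ofRealLp_apply (f : lp (fun _ : Fin N → ℤ => ℝ) 2) (z : Fin N → ℤ) :
    ofRealLp f z = ((f z : ℝ) : ℂ) := rfl

/-- real part map from complex lp to real lp -/
private def rePartLp (f : lp (fun _ : Fin N → ℤ => ℂ) 2) : lp (fun _ : Fin N → ℤ => ℝ) 2 :=
  ⟨fun z => (f z).re, by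
    show Memℓp (fun z => (f z).re) 2
    rw [memℓp_gen_iff two_toReal_pos]
    refine Summable.of_nonneg_of_le (fun z => ?_) (fun z => ?_)
      ((memℓp_gen_iff two_toReal_pos).1 (lp.memℓp f))
    · positivity
    · exact Real.rpow_le_rpow (norm_nonneg _) (Complex.abs_re_le_norm (f z))
        (le_of_lt two_toReal_pos)⟩

@[simp] private lemma rePartLp_apply (f : lp (fun _ : Fin N → ℤ => ℂ) 2) (z : Fin N → ℤ) :
    rePartLp f z = (f z).re := rfl

end ConvAux5

theorem convolution_equation_solvable (N : ℕ) (a : ℤ →₀ ℝ) (ha : a ≠ 0)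
    (hp : ∀ θ : ℝ, (a.sum fun k ak => (ak : ℂ) * Complex.exp (Complex.I * k * θ)) ≠ 0) :
    ∀ ξ : lp (fun _ : Fin N → ℤ => ℝ) 2,
      ∃! c : lp (fun _ : Fin N → ℤ => ℝ) 2,
        ∀ z : Fin N → ℤ, (a.sum fun k ak => ak * c (fun i => z i - k)) = ξ z := by
  intro ξ
  obtain ⟨TU, hTU⟩ := Tconv_isUnit (N := N) ha hp
  set ξc : lp (fun _ : Fin N → ℤ => ℂ) 2 := ofRealLp ξ with hξc
  -- the key equivalence
  have hiff : ∀ c : lp (fun _ : Fin N → ℤ => ℝ) 2,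
      (∀ z : Fin N → ℤ, (a.sum fun k ak => ak * c (fun i => z i - k)) = ξ z)
        ↔ Tconv N a (ofRealLp c) = ξc := by
    intro c
    constructor
    · intro h
      apply lp.ext
      funext z
      rw [Tconv_apply]
      have : (a.sum fun k ak => (ak : ℂ) * (ofRealLp c) (fun i => z i - k))
          = ((a.sum fun k ak => ak * c (fun i => z i - k) : ℝ) : ℂ) := by
        rw [Finsupp.sum, Finsupp.sum]
        simp only [ofRealLp_apply]
        push_cast
        rfl
      rw [this, h z]
      rfl
    · intro h z
      have h1 : Tconv N a (ofRealLp c) z = ξc z := by rw [h]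
      rw [Tconv_apply] at h1
      have : (a.sum fun k ak => (ak : ℂ) * (ofRealLp c) (fun i => z i - k))
          = ((a.sum fun k ak => ak * c (fun i => z i - k) : ℝ) : ℂ) := by
        rw [Finsupp.sum, Finsupp.sum]
        simp only [ofRealLp_apply]
        push_cast
        rfl
      rw [this] at h1
      have h2 : ((a.sum fun k ak => ak * c (fun i => z i - k) : ℝ) : ℂ)
          = ((ξ z : ℝ) : ℂ) := h1
      exact_mod_cast h2
  -- injectivity of Tconv
  have hinj : ∀ x y, Tconv N a x = Tconv N a y → x = y := by
    intro x y hxy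
    calc x = (1 : Asp N) x := rfl
      _ = ((↑TU⁻¹ * ↑TU : Asp N)) x := by rw [TU.inv_mul]
      _ = (↑TU⁻¹ : Asp N) (Tconv N a x) := by
          rw [ContinuousLinearMap.mul_apply, hTU]
      _ = (↑TU⁻¹ : Asp N) (Tconv N a y) := by rw [hxy]
      _ = ((↑TU⁻¹ * ↑TU : Asp N)) y := by rw [ContinuousLinearMap.mul_apply, hTU]
      _ = (1 : Asp N) y := by rw [TU.inv_mul]
      _ = y := rfl
  -- a complex solution
  set c' : lp (fun _ : Fin N → ℤ => ℂ) 2 := (↑TU⁻¹ : Asp N) ξc with hc'def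
  have hc' : Tconv N a c' = ξc := by
    rw [← hTU, hc'def, ← ContinuousLinearMap.mul_apply, TU.mul_inv]
    rfl
  have hmain : Tconv N a (ofRealLp (rePartLp c')) = ξc := by
    apply lp.ext
    funext z
    have h1 : Tconv N a c' z = ((ξ z : ℝ) : ℂ) := by rw [hc']; rfl
    rw [Tconv_apply] at h1
    rw [Tconv_apply]
    have h2 : (a.sum fun k ak => (ak : ℂ) * (ofRealLp (rePartLp c')) (fun i => z i - k))
        = (((a.sum fun k ak => (ak : ℂ) * c' (fun i => z i - k)).re : ℝ) : ℂ) := by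
      rw [Finsupp.sum, Finsupp.sum, Complex.re_sum, Complex.ofReal_sum]
      refine Finset.sum_congr rfl fun k _ => ?_
      simp [Complex.ofReal_mul]
    rw [h2, h1]
    show ((((ξ z : ℝ) : ℂ).re : ℝ) : ℂ) = ((ξ z : ℝ) : ℂ)
    simp
  refine ⟨rePartLp c', (hiff _).2 hmain, ?_⟩
  intro c hc
  have h3 : ofRealLp c = ofRealLp (rePartLp c') := hinj _ _ (by rw [(hiff c).1 hc, hmain])
  apply lp.ext
  funext z
  have h4 := congrFun (congrArg (Subtype.val) h3) z
  simpa using h4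
end
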